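/- For every discount factor λ ∈ (0,1) and every memory bound k ∈ ℕ (k ≥ 1), set ε = λ^{k+1}. Then in the game G₃(ε) with discount factor λ: every leader strategy profile with memory bound k gives the leader expected reward 0, while there exists a leader strategy profile (with a larger memory bound) whose leader expected reward is strictly positive. Hence for no memory bound k is an optimal leader strategy profile with memory bound k an optimal leader strategy profile among all leader strategy profiles. -/

import Mathlib

open scoped BigOperators

/-- A multi-player discounted sum game (MDSG) on sets of players `P`,
vertices `V` and actions `A`, all required to be finite (`A` nonempty).
The `owner` of a vertex chooses the action there; `tr` is the transition
function, `rew p v a` is the reward of player `p` for taking action `a`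
at vertex `v`, `init` is the initial probability distribution on the
vertices, and `disc` is the discount factor. -/
structure MDSG (P V A : Type) : Type where
  fin_P : Finite P
  fin_V : Finite V
  fin_A : Finite A
  nonempty_A : Nonempty A
  owner : V → P
  tr : V → A → V
  rew : P → V → A → ℝ
  init : V → ℝ
  init_nonneg : ∀ v, 0 ≤ init v
  init_sum : ∑' v, init v = 1
  disc : ℝ
  disc_pos : 0 < disc
  disc_lt_one : disc < 1

/-- A pure strategy profile: given the history (the list of vertex/action pairs
seen so far) and the current vertex, the owner of the current vertex chooses
an action.  The strategy of an individual player `p` is the restriction of the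
profile to the vertices owned by `p`. -/
abbrev Profile (V A : Type) : Type := List (V × A) → V → A

namespace MDSG

variable {P V A : Type}

/-- The pair (history, current vertex) after `n` steps of the play of `σ` from `v`. -/
def histState (G : MDSG P V A) (σ : Profile V A) (v : V) : ℕ → List (V × A) × V
  | 0 => ([], v)
  | n + 1 =>
    let s := G.histState σ v n
    (s.1 ++ [(s.2, σ s.1 s.2)], G.tr s.2 (σ s.1 s.2))

/-- The vertex visited at step `n` of the play of `σ` from `v`. -/
def playV (G : MDSG P V A) (σ : Profile V A) (v : V) (n : ℕ) : V :=
  (G.histState σ v n).2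

/-- The action taken at step `n` of the play of `σ` from `v`. -/
def playA (G : MDSG P V A) (σ : Profile V A) (v : V) (n : ℕ) : A :=
  σ (G.histState σ v n).1 (G.playV σ v n)

/-- The discounted reward of player `p` on the play of `σ` from `v`. -/
noncomputable def reward (G : MDSG P V A) (p : P) (σ : Profile V A) (v : V) : ℝ :=
  ∑' i : ℕ, G.rew p (G.playV σ v i) (G.playA σ v i) * G.disc ^ i

/-- The expected reward of player `p` under the strategy profile `σ`. -/
noncomputable def ER (G : MDSG P V A) (p : P) (σ : Profile V A) : ℝ :=
  ∑' v : V, G.init v * G.reward p σ v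

/-- `σ'` differs from `σ` at most in the strategy of player `p`. -/
def DiffOnly (G : MDSG P V A) (σ σ' : Profile V A) (p : P) : Prop :=
  ∀ h v, G.owner v ≠ p → σ' h v = σ h v

/-- Nash equilibrium: no player can profit from a unilateral deviation. -/
def IsNash (G : MDSG P V A) (σ : Profile V A) : Prop :=
  ∀ p σ', G.DiffOnly σ σ' p → G.ER p σ' ≤ G.ER p σ

/-- Leader strategy profile: no player other than the leader `l` can profit
from a unilateral deviation. -/
def IsLeaderSP (G : MDSG P V A) (l : P) (σ : Profile V A) : Prop :=
  ∀ p, p ≠ l → ∀ σ', G.DiffOnly σ σ' p → G.ER p σ' ≤ G.ER p σ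

/-- `σ` is a (pure) strategy profile with memory bound `b`: there is a memory
set `M` with `|M| ≤ b`, an initial memory state, a memory update function and
a usage function producing all the actions of `σ`. -/
def MemBound (G : MDSG P V A) (σ : Profile V A) (b : ℕ) : Prop :=
  ∃ n : ℕ, n ≤ b ∧ ∃ (m₀ : Fin n) (μ : Fin n → V × A → Fin n) (u : Fin n → V → A),
    ∀ h v, σ h v = u (h.foldl μ m₀) v

/-- `σ` is memoryless (positional): actions depend only on the current vertex. -/
def Positional (G : MDSG P V A) (σ : Profile V A) : Prop :=
  ∀ h h' v, σ h v = σ h' v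

open Classical in
/-- Combination of a strategy for player `p` with a joint strategy of the other players. -/
noncomputable def combine (G : MDSG P V A) (p : P) (τp τo : Profile V A) : Profile V A :=
  fun h v => if G.owner v = p then τp h v else τo h v

/-- The lower value of player `p` at vertex `v`: the supremum over the pure
strategies of `p` of the infimum over the joint pure strategies of the other
players of the reward of `p` on the resulting play from `v`. -/
noncomputable def lowerValue (G : MDSG P V A) (p : P) (v : V) : ℝ :=
  ⨆ τp : Profile V A, ⨅ τo : Profile V A, G.reward p (G.combine p τp τo) v

/-- The upper value of player `p` at vertex `v`. -/
noncomputable def upperValue (G : MDSG P V A) (p : P) (v : V) : ℝ :=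
  ⨅ τo : Profile V A, ⨆ τp : Profile V A, G.reward p (G.combine p τp τo) v

/-- The history `h` contains a deviation from `σ` at position `i`. -/
def DeviatesAt (G : MDSG P V A) (σ : Profile V A) (h : List (V × A)) (i : ℕ) : Prop :=
  ∃ hi : i < h.length, (h.get ⟨i, hi⟩).2 ≠ σ (h.take i) (h.get ⟨i, hi⟩).1

/-- Reward-and-punish profile: on every history that deviates from the
prescribed actions, every action depends only on the current vertex and on the
identity of the first player who deviated (all players follow a fixed
positional strategy depending only on the first deviator). -/
def IsRewardPunish (G : MDSG P V A) (σ : Profile V A) : Prop :=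
  ∃ punish : P → V → A, ∀ (h : List (V × A)) (i : ℕ) (hi : i < h.length),
    G.DeviatesAt σ h i → (∀ j, j < i → ¬ G.DeviatesAt σ h j) →
    ∀ v, σ h v = punish (G.owner (h.get ⟨i, hi⟩).1) v

/-- The outcome plays of `σ` are generated with compliance memory bound `b`:
on every history on which all players have complied, the actions of `σ` are
produced by a memory structure with at most `b` states. -/
def ComplianceMemBound (G : MDSG P V A) (σ : Profile V A) (b : ℕ) : Prop :=
  ∃ n : ℕ, n ≤ b ∧ ∃ (m₀ : Fin n) (μ : Fin n → V × A → Fin n) (u : Fin n → V → A),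
    ∀ h : List (V × A), (∀ i, ¬ G.DeviatesAt σ h i) →
      ∀ v, σ h v = u (h.foldl μ m₀) v

/-- The set of stationary mixed decision vectors: an assignment of a
probability distribution over the actions to every vertex. -/
def simplexD (V A : Type) : Set (V → A → ℝ) :=
  {d | ∀ v, (∀ a, 0 ≤ d v a) ∧ ∑' a, d v a = 1}

end MDSG


/-- pigeonhole on iteration -/
lemma iterate_repeat {n : ℕ} (f : Fin n → Fin n) (x : Fin n) (t : ℕ) :
    ∃ t' < n, f^[t] x = f^[t'] x := by
  obtain ⟨i, j, hij, heq⟩ : ∃ i j : ℕ, i < j ∧ j ≤ n ∧ f^[i] x = f^[j] x := by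
    obtain ⟨a, b, hab, h⟩ := Fintype.exists_ne_map_eq_of_card_lt
      (fun i : Fin (n+1) => f^[(i : ℕ)] x) (by simp)
    rcases lt_or_gt_of_ne (fun h' => hab (Fin.ext h')) with h' | h'
    · exact ⟨a, b, h', by omega, h⟩
    · exact ⟨b, a, h', by omega, h.symm⟩
  obtain ⟨hjn, heq⟩ := heq
  induction t using Nat.strong_induction_on with
  | _ t ih =>
    by_cases ht : t < n
    · exact ⟨t, ht, rfl⟩
    · push_neg at ht
      have key : f^[t] x = f^[t - (j - i)] x := by
        have e1 : f^[t] x = f^[t - j] (f^[j] x) := by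
          rw [← Function.iterate_add_apply]; congr 1; omega
        rw [e1, ← heq, ← Function.iterate_add_apply]
        congr 1; omega
      obtain ⟨t', h1, h2⟩ := ih (t - (j - i)) (by omega)
      exact ⟨t', h1, key.trans h2⟩

lemma summable_tail (lam c : ℝ) (h0 : 0 ≤ lam) (h1 : lam < 1) (hc : 0 ≤ c) (N : ℕ) :
    Summable (fun i : ℕ => if N ≤ i then c * lam ^ i else 0) := by
  refine Summable.of_nonneg_of_le (fun i => ?_) (fun i => ?_)
    ((summable_geometric_of_lt_one h0 h1).mul_left c)
  · split <;> positivity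
  · split
    · exact le_rfl
    · positivity

lemma tsum_tail (lam c : ℝ) (h0 : 0 ≤ lam) (h1 : lam < 1) (hc : 0 ≤ c) (N : ℕ) :
    ∑' i : ℕ, (if N ≤ i then c * lam ^ i else 0) = c * lam ^ N / (1 - lam) := by
  have hs := summable_tail lam c h0 h1 hc N
  have key := Summable.sum_add_tsum_nat_add (f := fun i : ℕ => if N ≤ i then c * lam ^ i else 0) N hs
  rw [← key, Finset.sum_eq_zero (fun i hi => by
    rw [if_neg]; simpa using Finset.mem_range.mp hi)]
  have h2 : (fun i : ℕ => if N ≤ i + N then c * lam ^ (i + N) else 0)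
      = fun i : ℕ => (c * lam ^ N) * lam ^ i := by
    funext i; rw [if_pos (by omega), pow_add]; ring
  rw [zero_add, h2, tsum_mul_left, tsum_geometric_of_lt_one h0 h1]
  field_simp

namespace MDSG
variable {P V A : Type}

lemma playV_succ' (G : MDSG P V A) (σ : Profile V A) (v : V) (n : ℕ) :
    G.playV σ v (n+1) = G.tr (G.playV σ v n) (G.playA σ v n) := by
  simp [playV, playA, histState]

lemma playA_def' (G : MDSG P V A) (σ : Profile V A) (v : V) (n : ℕ) :
    G.playA σ v n = σ (G.histState σ v n).1 (G.playV σ v n) := rfl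

lemma playV_zero' (G : MDSG P V A) (σ : Profile V A) (v : V) :
    G.playV σ v 0 = v := rfl

lemma histState_zero' (G : MDSG P V A) (σ : Profile V A) (v : V) :
    G.histState σ v 0 = ([], v) := rfl

lemma histState_len (G : MDSG P V A) (σ : Profile V A) (v : V) :
    ∀ n, (G.histState σ v n).1.length = n
  | 0 => rfl
  | n+1 => by simp [histState, histState_len G σ v n]

lemma histState_succ_fst (G : MDSG P V A) (σ : Profile V A) (v : V) (n : ℕ) :
    (G.histState σ v (n+1)).1
      = (G.histState σ v n).1 ++ [(G.playV σ v n, G.playA σ v n)] := by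
  simp [playV, playA, histState]

end MDSG


namespace MDSG

/-- The game `G₃(ε)` (Figure 4 of the paper) with discount factor `lam`:
two players `0` (player 1) and `1` (the leader); four vertices `0, 1, 2, 3`
(representing vertices 1, 2, 3, 4), where vertices `0, 2, 3` belong to
player 1 and vertex `1` belongs to the leader; actions `Bool`
(`true` = "go", `false` = "stay").  Vertex `0`: "go" moves to `1` and "stay"
moves to `3`, both with rewards `(0,0)`.  Vertex `1`: "stay" loops with
rewards `(1,0)`, "go" moves to `2` with rewards `(0,0)`.  Vertex `2` loops
with rewards `(0,50)`; vertex `3` loops with rewards `(1-ε,0)`.  The initial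
distribution is the point mass at vertex `0`. -/
noncomputable def G3 (lam eps : ℝ) (h0 : 0 < lam) (h1 : lam < 1) :
    MDSG (Fin 2) (Fin 4) Bool where
  fin_P := inferInstance
  fin_V := inferInstance
  fin_A := inferInstance
  nonempty_A := inferInstance
  owner := fun v => if v = 1 then 1 else 0
  tr := fun v a =>
    if v = 0 then (if a then 1 else 3)
    else if v = 1 then (if a then 2 else 1)
    else v
  rew := fun p v _a =>
    if v = 1 then (if _a then 0 else (if p = 0 then 1 else 0))
    else if v = 2 then (if p = 1 then 50 else 0)
    else if v = 3 then (if p = 0 then 1 - eps else 0)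
    else 0
  init := fun v => if v = 0 then 1 else 0
  init_nonneg := by intro v; split <;> norm_num
  init_sum := by simpa using tsum_ite_eq (0 : Fin 4) (1 : ℝ)
  disc := lam
  disc_pos := h0
  disc_lt_one := h1

end MDSG

section G3Lemmas
open MDSG

variable {lam eps : ℝ} {h0 : 0 < lam} {h1 : lam < 1}

lemma G3_disc : (G3 lam eps h0 h1).disc = lam := rfl

lemma G3_rew1 (v : Fin 4) (a : Bool) (hv : v ≠ 2) :
    (G3 lam eps h0 h1).rew 1 v a = 0 := by
  fin_cases v <;> cases a <;> simp_all [G3]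

lemma G3_rew1_2 (a : Bool) : (G3 lam eps h0 h1).rew 1 2 a = 50 := by
  cases a <;> simp [G3]

lemma G3_rew0_0 (a : Bool) : (G3 lam eps h0 h1).rew 0 0 a = 0 := by
  cases a <;> simp [G3]

lemma G3_rew0_1f : (G3 lam eps h0 h1).rew 0 1 false = 1 := by simp [G3]

lemma G3_rew0_1t : (G3 lam eps h0 h1).rew 0 1 true = 0 := by simp [G3]

lemma G3_rew0_2 (a : Bool) : (G3 lam eps h0 h1).rew 0 2 a = 0 := by
  cases a <;> simp [G3]

lemma G3_rew0_3 (a : Bool) : (G3 lam eps h0 h1).rew 0 3 a = 1 - eps := by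
  cases a <;> simp [G3]

lemma G3_tr0 (a : Bool) : (G3 lam eps h0 h1).tr 0 a = if a then 1 else 3 := by
  cases a <;> simp [G3]

lemma G3_tr1 (a : Bool) : (G3 lam eps h0 h1).tr 1 a = if a then 2 else 1 := by
  cases a <;> simp [G3]

lemma G3_tr2 (a : Bool) : (G3 lam eps h0 h1).tr 2 a = 2 := by
  cases a <;> simp [G3]

lemma G3_tr3 (a : Bool) : (G3 lam eps h0 h1).tr 3 a = 3 := by
  cases a <;> simp [G3]

lemma G3_owner1 : (G3 lam eps h0 h1).owner 1 = 1 := by simp [G3]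

lemma G3_ER (p : Fin 2) (σ : Profile (Fin 4) Bool) :
    (G3 lam eps h0 h1).ER p σ = (G3 lam eps h0 h1).reward p σ 0 := by
  unfold MDSG.ER
  have key : ∀ v : Fin 4, (G3 lam eps h0 h1).init v * (G3 lam eps h0 h1).reward p σ v
      = if v = 0 then (G3 lam eps h0 h1).reward p σ 0 else 0 := by
    intro v
    by_cases hv : v = 0 <;> simp [G3, hv]
  rw [tsum_congr key, tsum_ite_eq]

lemma G3_play_goto3 (σ : Profile (Fin 4) Bool) (ha : σ [] 0 = false) :
    ∀ t, 1 ≤ t → (G3 lam eps h0 h1).playV σ 0 t = 3 := by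
  intro t ht
  induction t with
  | zero => omega
  | succ n ih =>
    rcases Nat.eq_zero_or_pos n with hn | hn
    · subst hn
      rw [playV_succ', playV_zero', playA_def', playV_zero', histState_zero', ha, G3_tr0]
      simp
    · rw [playV_succ', ih hn, G3_tr3]

lemma G3_reward0_goto3 (heps : eps ≤ 1) (σ : Profile (Fin 4) Bool) (ha : σ [] 0 = false) :
    (G3 lam eps h0 h1).reward 0 σ 0 = (1 - eps) * lam ^ 1 / (1 - lam) := by
  unfold MDSG.reward
  have key : ∀ i : ℕ, (G3 lam eps h0 h1).rew 0 ((G3 lam eps h0 h1).playV σ 0 i)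
        ((G3 lam eps h0 h1).playA σ 0 i) * (G3 lam eps h0 h1).disc ^ i
      = if 1 ≤ i then (1 - eps) * lam ^ i else 0 := by
    intro i
    rcases Nat.eq_zero_or_pos i with hi | hi
    · subst hi
      rw [playV_zero', G3_rew0_0, if_neg (by omega), zero_mul]
    · rw [G3_play_goto3 σ ha i hi, G3_rew0_3, if_pos (show 1 ≤ i by omega), G3_disc]
  rw [tsum_congr key, tsum_tail lam (1 - eps) h0.le h1 (by linarith) 1]

lemma G3_reward0_play (σ : Profile (Fin 4) Bool) (m : ℕ)
    (hV1 : ∀ t, 1 ≤ t → t ≤ m + 1 → (G3 lam eps h0 h1).playV σ 0 t = 1)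
    (hA : ∀ t, 1 ≤ t → t ≤ m → (G3 lam eps h0 h1).playA σ 0 t = false)
    (hAm : (G3 lam eps h0 h1).playA σ 0 (m + 1) = true)
    (hV2 : ∀ t, m + 2 ≤ t → (G3 lam eps h0 h1).playV σ 0 t = 2) :
    (G3 lam eps h0 h1).reward 0 σ 0
      = 1 * lam ^ 1 / (1 - lam) - 1 * lam ^ (m + 1) / (1 - lam) := by
  unfold MDSG.reward
  have key : ∀ i : ℕ, (G3 lam eps h0 h1).rew 0 ((G3 lam eps h0 h1).playV σ 0 i)
        ((G3 lam eps h0 h1).playA σ 0 i) * (G3 lam eps h0 h1).disc ^ i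
      = (if 1 ≤ i then 1 * lam ^ i else 0) - (if m + 1 ≤ i then 1 * lam ^ i else 0) := by
    intro i
    rcases Nat.eq_zero_or_pos i with hi | hi
    · subst hi
      rw [playV_zero', G3_rew0_0, if_neg (by omega), if_neg (by omega)]
      ring
    · rcases Nat.lt_or_ge i (m + 1) with hi2 | hi2
      · rw [hV1 i hi (by omega), hA i hi (by omega), G3_rew0_1f, G3_disc,
          if_pos (show 1 ≤ i by omega), if_neg (by omega)]
        ring
      · rcases Nat.eq_or_lt_of_le hi2 with hi3 | hi3
        · have hieq : i = m + 1 := by omega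
          subst hieq
          rw [hV1 (m + 1) hi (by omega), hAm, G3_rew0_1t, if_pos (show 1 ≤ m + 1 by omega),
            if_pos (show m + 1 ≤ m + 1 by omega), G3_disc]
          ring
        · rw [hV2 i (by omega), G3_rew0_2, if_pos (show 1 ≤ i by omega),
            if_pos (show m + 1 ≤ i by omega)]
          ring
  rw [tsum_congr key,
    Summable.tsum_sub (summable_tail lam 1 h0.le h1 zero_le_one 1)
      (summable_tail lam 1 h0.le h1 zero_le_one (m + 1)),
    tsum_tail lam 1 h0.le h1 zero_le_one 1,
    tsum_tail lam 1 h0.le h1 zero_le_one (m + 1)]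

lemma G3_reward1_zero (σ : Profile (Fin 4) Bool)
    (hV : ∀ t, (G3 lam eps h0 h1).playV σ 0 t ≠ 2) :
    (G3 lam eps h0 h1).reward 1 σ 0 = 0 := by
  unfold MDSG.reward
  have key : ∀ i : ℕ, (G3 lam eps h0 h1).rew 1 ((G3 lam eps h0 h1).playV σ 0 i)
        ((G3 lam eps h0 h1).playA σ 0 i) * (G3 lam eps h0 h1).disc ^ i = 0 := by
    intro i
    rw [G3_rew1 _ _ (hV i), zero_mul]
  rw [tsum_congr key, tsum_zero]

lemma G3_reward1_play (σ : Profile (Fin 4) Bool) (m : ℕ)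
    (hVle : ∀ t, t < m + 2 → (G3 lam eps h0 h1).playV σ 0 t ≠ 2)
    (hV2 : ∀ t, m + 2 ≤ t → (G3 lam eps h0 h1).playV σ 0 t = 2) :
    (G3 lam eps h0 h1).reward 1 σ 0 = 50 * lam ^ (m + 2) / (1 - lam) := by
  unfold MDSG.reward
  have key : ∀ i : ℕ, (G3 lam eps h0 h1).rew 1 ((G3 lam eps h0 h1).playV σ 0 i)
        ((G3 lam eps h0 h1).playA σ 0 i) * (G3 lam eps h0 h1).disc ^ i
      = if m + 2 ≤ i then 50 * lam ^ i else 0 := by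
    intro i
    rcases Nat.lt_or_ge i (m + 2) with hi | hi
    · rw [G3_rew1 _ _ (hVle i hi), zero_mul, if_neg (by omega)]
    · rw [hV2 i hi, G3_rew1_2, if_pos hi, G3_disc]
  rw [tsum_congr key, tsum_tail lam 50 h0.le h1 (by norm_num) (m + 2)]

lemma G3_play_lenstrat (σ : Profile (Fin 4) Bool) (K : ℕ) (ha0 : σ [] 0 = true)
    (hσ : ∀ h : List (Fin 4 × Bool), σ h 1 = decide (K + 1 ≤ h.length)) :
    (∀ t, 1 ≤ t → t ≤ K + 1 → (G3 lam eps h0 h1).playV σ 0 t = 1) ∧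
    (∀ t, 1 ≤ t → t ≤ K → (G3 lam eps h0 h1).playA σ 0 t = false) ∧
    (G3 lam eps h0 h1).playA σ 0 (K + 1) = true ∧
    (∀ t, K + 2 ≤ t → (G3 lam eps h0 h1).playV σ 0 t = 2) := by
  have hV1 : ∀ t, 1 ≤ t → t ≤ K + 1 → (G3 lam eps h0 h1).playV σ 0 t = 1 := by
    intro t
    induction t with
    | zero => omega
    | succ n ih =>
      intro _ hle
      rcases Nat.eq_zero_or_pos n with hn | hn
      · subst hn
        rw [playV_succ', playV_zero', playA_def', playV_zero', histState_zero', ha0, G3_tr0]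
        simp
      · have hVn := ih hn (by omega)
        have hAn : (G3 lam eps h0 h1).playA σ 0 n = false := by
          rw [playA_def', hVn, hσ, histState_len]
          simp only [decide_eq_false_iff_not]
          omega
        rw [playV_succ', hVn, hAn, G3_tr1]
        simp
  have hA : ∀ t, 1 ≤ t → t ≤ K → (G3 lam eps h0 h1).playA σ 0 t = false := by
    intro t h1t h2t
    rw [playA_def', hV1 t h1t (by omega), hσ, histState_len]
    simp only [decide_eq_false_iff_not]
    omega
  have hAK : (G3 lam eps h0 h1).playA σ 0 (K + 1) = true := by
    rw [playA_def', hV1 (K + 1) (by omega) le_rfl, hσ, histState_len]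
    simp
  have hV2 : ∀ t, K + 2 ≤ t → (G3 lam eps h0 h1).playV σ 0 t = 2 := by
    intro t
    induction t with
    | zero => omega
    | succ n ih =>
      intro ht
      rcases Nat.lt_or_ge n (K + 2) with hn | hn
      · have hn' : n = K + 1 := by omega
        subst hn'
        rw [playV_succ', hV1 (K + 1) (by omega) le_rfl, hAK, G3_tr1]
        simp
      · rw [playV_succ', ih hn, G3_tr2]
  exact ⟨hV1, hA, hAK, hV2⟩

lemma G3_play_mem (σ : Profile (Fin 4) Bool) {n : ℕ} (m₀ : Fin n)
    (μ : Fin n → Fin 4 × Bool → Fin n) (u : Fin n → Fin 4 → Bool)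
    (hσ : ∀ h v, σ h v = u (h.foldl μ m₀) v) (ha0 : σ [] 0 = true)
    (t : ℕ)
    (hfalse : ∀ j, j < t → u ((fun m => μ m (1, u m 1))^[j] (μ m₀ (0, true))) 1 = false) :
    (G3 lam eps h0 h1).playV σ 0 (t + 1) = 1 ∧
    ((G3 lam eps h0 h1).histState σ 0 (t + 1)).1.foldl μ m₀
      = (fun m => μ m (1, u m 1))^[t] (μ m₀ (0, true)) := by
  induction t with
  | zero =>
    have hA0 : (G3 lam eps h0 h1).playA σ 0 0 = true := by
      rw [playA_def', playV_zero', histState_zero', ha0]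
    constructor
    · rw [playV_succ', playV_zero', hA0, G3_tr0]
      simp
    · rw [histState_succ_fst, playV_zero', hA0, histState_zero']
      simp
  | succ t ih =>
    obtain ⟨hV, hM⟩ := ih (fun j hj => hfalse j (by omega))
    have hA : (G3 lam eps h0 h1).playA σ 0 (t + 1) = false := by
      rw [playA_def', hV, hσ, hM]
      exact hfalse t (by omega)
    constructor
    · rw [playV_succ', hV, hA, G3_tr1]
      simp
    · rw [histState_succ_fst, List.foldl_append, hM, hV, hA]
      rw [Function.iterate_succ_apply']
      simp only [List.foldl_cons, List.foldl_nil]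
      rw [hfalse t (by omega)]

end G3Lemmas


open MDSG in
/-- For every discount factor `lam ∈ (0,1)` and every memory bound `k ≥ 1`,
taking `ε = lam ^ (k+1)`, in the game `G₃(ε)` with discount factor `lam`:
every leader strategy profile with memory bound `k` gives the leader (player
`1`) expected reward `0`, while there exists a leader strategy profile (using
more memory) whose leader expected reward is strictly positive.  Hence no
memory bound suffices for optimal leader strategy profiles. -/
theorem no_memory_bound_suffices (lam : ℝ) (h0 : 0 < lam) (h1 : lam < 1)
    (k : ℕ) (hk : 1 ≤ k) :
    (∀ σ : Profile (Fin 4) Bool,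
        (G3 lam (lam ^ (k + 1)) h0 h1).MemBound σ k →
        (G3 lam (lam ^ (k + 1)) h0 h1).IsLeaderSP 1 σ →
        (G3 lam (lam ^ (k + 1)) h0 h1).ER 1 σ = 0) ∧
    (∃ σ : Profile (Fin 4) Bool,
        (G3 lam (lam ^ (k + 1)) h0 h1).IsLeaderSP 1 σ ∧
        0 < (G3 lam (lam ^ (k + 1)) h0 h1).ER 1 σ) := by
  have h1l : (0:ℝ) < 1 - lam := by linarith
  have hepsle : lam ^ (k + 1) ≤ 1 := le_of_lt (pow_lt_one₀ h0.le h1 (by omega))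
  constructor
  · -- part (a)
    intro σ hmem hLSP
    rw [G3_ER]
    obtain ⟨n, hnk, m₀, μ, u, hmemσ⟩ := hmem
    by_cases ha0 : σ [] 0 = true
    · by_cases hall : ∀ j, j < k → u ((fun m => μ m (1, u m 1))^[j] (μ m₀ (0, true))) 1 = false
      · -- the leader never moves to vertex 2
        have hallall : ∀ j, u ((fun m => μ m (1, u m 1))^[j] (μ m₀ (0, true))) 1 = false := by
          intro j
          obtain ⟨j', hj', hjj⟩ := iterate_repeat (fun m => μ m (1, u m 1)) (μ m₀ (0, true)) j
          rw [hjj]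
          exact hall j' (by omega)
        apply G3_reward1_zero
        intro t
        match t with
        | 0 => rw [playV_zero']; decide
        | t + 1 =>
          have := (G3_play_mem (lam := lam) (eps := lam ^ (k + 1)) (h0 := h0) (h1 := h1) σ m₀ μ u hmemσ ha0 t (fun j _ => hallall j)).1
          rw [this]; decide
      · -- the play reaches vertex 2 within k steps: not a leader SP
        exfalso
        push_neg at hall
        obtain ⟨j0, hj0k, hj0⟩ := hall
        rw [Bool.ne_false_iff] at hj0
        have hex : ∃ j, u ((fun m => μ m (1, u m 1))^[j] (μ m₀ (0, true))) 1 = true := ⟨j0, hj0⟩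
        set m := Nat.find hex with hm
        have hmtrue : u ((fun m => μ m (1, u m 1))^[m] (μ m₀ (0, true))) 1 = true :=
          Nat.find_spec hex
        have hmin : ∀ j, j < m → u ((fun m => μ m (1, u m 1))^[j] (μ m₀ (0, true))) 1 = false := by
          intro j hj
          have := Nat.find_min hex hj
          simpa using this
        have hmk : m < k := by
          have : m ≤ j0 := Nat.find_le hj0
          omega
        have hgood : ∀ t : ℕ, t ≤ m →
            (G3 lam (lam ^ (k + 1)) h0 h1).playV σ 0 (t + 1) = 1 ∧
            ((G3 lam (lam ^ (k + 1)) h0 h1).histState σ 0 (t + 1)).1.foldl μ m₀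
              = (fun m => μ m (1, u m 1))^[t] (μ m₀ (0, true)) :=
          fun t ht => G3_play_mem (lam := lam) (eps := lam ^ (k + 1)) (h0 := h0) (h1 := h1) σ m₀ μ u hmemσ ha0 t (fun j hj => hmin j (by omega))
        have hV1 : ∀ t, 1 ≤ t → t ≤ m + 1 → (G3 lam (lam ^ (k + 1)) h0 h1).playV σ 0 t = 1 := by
          intro t h1t h2t
          obtain ⟨hv, -⟩ := hgood (t - 1) (by omega)
          rw [show t - 1 + 1 = t by omega] at hv
          exact hv
        have hA : ∀ t, 1 ≤ t → t ≤ m → (G3 lam (lam ^ (k + 1)) h0 h1).playA σ 0 t = false := by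
          intro t h1t h2t
          obtain ⟨hv, hM⟩ := hgood (t - 1) (by omega)
          rw [show t - 1 + 1 = t by omega] at hv hM
          rw [playA_def', hv, hmemσ, hM]
          exact hmin (t - 1) (by omega)
        have hAm : (G3 lam (lam ^ (k + 1)) h0 h1).playA σ 0 (m + 1) = true := by
          obtain ⟨hv, hM⟩ := hgood m le_rfl
          rw [playA_def', hv, hmemσ, hM]
          exact hmtrue
        have hV2 : ∀ t, m + 2 ≤ t → (G3 lam (lam ^ (k + 1)) h0 h1).playV σ 0 t = 2 := by
          intro t
          induction t with
          | zero => omega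
          | succ tn ih =>
            intro ht
            rcases Nat.lt_or_ge tn (m + 2) with hn | hn
            · have hn' : tn = m + 1 := by omega
              subst hn'
              rw [playV_succ', hV1 (m + 1) (by omega) le_rfl, hAm, G3_tr1]
              simp
            · rw [playV_succ', ih hn, G3_tr2]
        have hrew : (G3 lam (lam ^ (k + 1)) h0 h1).reward 0 σ 0
            = 1 * lam ^ 1 / (1 - lam) - 1 * lam ^ (m + 1) / (1 - lam) :=
          G3_reward0_play σ m hV1 hA hAm hV2
        -- the deviation of player 0: go to vertex 3 immediately
        set σ' : Profile (Fin 4) Bool := fun h v => if v = 0 then false else σ h v with hσ'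
        have hdiff : (G3 lam (lam ^ (k + 1)) h0 h1).DiffOnly σ σ' 0 := by
          intro h v hv
          fin_cases v <;> simp_all [MDSG.G3, hσ']
        have hrew' : (G3 lam (lam ^ (k + 1)) h0 h1).reward 0 σ' 0
            = (1 - lam ^ (k + 1)) * lam ^ 1 / (1 - lam) :=
          G3_reward0_goto3 hepsle σ' (by simp [hσ'])
        have hle := hLSP 0 (by decide) σ' hdiff
        rw [G3_ER, G3_ER, hrew, hrew'] at hle
        rw [← sub_div] at hle
        have key := (div_le_div_iff_of_pos_right h1l).mp hle
        have hpow : lam ^ (k + 2) < lam ^ (m + 1) :=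
          pow_lt_pow_right_of_lt_one₀ h0 h1 (by omega)
        have e : (1 - lam ^ (k + 1)) * lam ^ 1 = lam ^ 1 - lam ^ (k + 2) := by ring
        rw [e] at key
        linarith
    · -- player 0 moves to vertex 3 immediately: leader gets 0
      rw [Bool.not_eq_true] at ha0
      apply G3_reward1_zero
      intro t
      match t with
      | 0 => rw [playV_zero']; decide
      | t + 1 =>
        rw [G3_play_goto3 σ ha0 (t + 1) (by omega)]
        decide
  · -- part (b)
    refine ⟨fun h v => if v = 1 then decide (k + 1 + 1 ≤ h.length) else true, ?_, ?_⟩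
    · -- it is a leader strategy profile
      intro p hp σ' hdiff
      have hp0 : p = 0 := by fin_cases p <;> simp_all
      subst hp0
      have hσ'1 : ∀ h : List (Fin 4 × Bool), σ' h 1 = decide (k + 1 + 1 ≤ h.length) := by
        intro h
        rw [hdiff h 1 (by simp [MDSG.G3])]
        simp
      rw [G3_ER, G3_ER]
      have hvs : (G3 lam (lam ^ (k + 1)) h0 h1).reward 0
          (fun h v => if v = 1 then decide (k + 1 + 1 ≤ h.length) else true) 0
          = 1 * lam ^ 1 / (1 - lam) - 1 * lam ^ (k + 1 + 1) / (1 - lam) := by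
        obtain ⟨hV1, hA, hAK, hV2⟩ :=
          G3_play_lenstrat (lam := lam) (eps := lam ^ (k+1)) (h0 := h0) (h1 := h1)
            (fun h v => if v = 1 then decide (k + 1 + 1 ≤ h.length) else true) (k + 1)
            (by norm_num) (fun h => by simp)
        exact G3_reward0_play _ (k + 1) hV1 hA hAK hV2
      rw [hvs]
      by_cases ha0' : σ' [] 0 = true
      · obtain ⟨hV1, hA, hAK, hV2⟩ := G3_play_lenstrat (lam := lam) (eps := lam ^ (k+1))
          (h0 := h0) (h1 := h1) σ' (k + 1) ha0' hσ'1
        rw [G3_reward0_play σ' (k + 1) hV1 hA hAK hV2]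
      · rw [Bool.not_eq_true] at ha0'
        rw [G3_reward0_goto3 hepsle σ' ha0']
        apply le_of_eq
        rw [← sub_div]
        congr 1
        ring
    · -- the leader gets a strictly positive reward
      rw [G3_ER]
      obtain ⟨hV1, hA, hAK, hV2⟩ := G3_play_lenstrat (lam := lam) (eps := lam ^ (k+1))
        (h0 := h0) (h1 := h1)
        (fun h v => if v = 1 then decide (k + 1 + 1 ≤ h.length) else true) (k + 1)
        (by norm_num) (fun h => by simp)
      have hVle : ∀ t, t < k + 1 + 2 →
          (G3 lam (lam ^ (k + 1)) h0 h1).playV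
            (fun h v => if v = 1 then decide (k + 1 + 1 ≤ h.length) else true) 0 t ≠ 2 := by
        intro t ht
        match t with
        | 0 => rw [playV_zero']; decide
        | t + 1 =>
          rw [hV1 (t + 1) (by omega) (by omega)]
          decide
      rw [G3_reward1_play _ (k + 1) hVle hV2]
      apply div_pos
      · positivity
      · linarith
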